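/- Let S = (A, φ, W) be a DF0L system that is strongly circular with threshold D_s. Then S is weakly circular with weak circularity threshold D_w ≤ 2·D_s + max_{c∈A} |φ(c)|. -/

import Mathlib

/-- The morphism on words induced by a map on letters. -/
def applyM {A B : Type*} (f : A → List B) (w : List A) : List B := (w.map f).flatten

/-- `wpow u n` is the word `u` repeated `n` times. -/
def wpow {A : Type*} (u : List A) (n : ℕ) : List A := (List.replicate n u).flatten

/-- A word is primitive if it is nonempty and not a proper power. -/
def Primitive {A : Type*} (w : List A) : Prop := w ≠ [] ∧ ∀ u n, w = wpow u n → n = 1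

/-- Conjugacy of words. -/
def Conj {A : Type*} (u v : List A) : Prop := ∃ x y, u = x ++ y ∧ v = y ++ x

/-- The language of a D(F)0L system with (iterated) morphism `g` and axiom set `W`:
all factors of all `g^[n] w`, `w ∈ W`. -/
def LangG {A : Type*} (g : List A → List A) (W : Set (List A)) : Set (List A) :=
  {u | ∃ n : ℕ, ∃ w ∈ W, u <:+: g^[n] w}

/-- `(s, w, t)` is an interpretation of `u`: `w` is in the language and `g w = s ++ u ++ t`. -/
def Interp {A : Type*} (g : List A → List A) (L : Set (List A)) (s w t u : List A) : Prop :=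
  w ∈ L ∧ g w = s ++ u ++ t

/-- The pair `(u₁, u₂)` is compatible with the interpretation `(s, w, t)` of `u₁ ++ u₂`. -/
def Compatible {A : Type*} (g : List A → List A) (s w t u₁ u₂ : List A) : Prop :=
  ∃ w₁ w₂, w = w₁ ++ w₂ ∧ g w₁ = s ++ u₁ ∧ g w₂ = u₂ ++ t

/-- Weakly synchronizing pair: compatible with all interpretations of `u₁ ++ u₂`. -/
def WeakSync {A : Type*} (g : List A → List A) (L : Set (List A)) (u₁ u₂ : List A) : Prop :=
  ∀ s w t, Interp g L s w t (u₁ ++ u₂) → Compatible g s w t u₁ u₂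

/-- Strongly synchronizing pair. -/
def StrongSync {A : Type*} (g : List A → List A) (L : Set (List A)) (u₁ u₂ : List A) : Prop :=
  u₁ ≠ [] ∧ ∃ a : A, ∀ s w t, Interp g L s w t (u₁ ++ u₂) →
    ∃ w₁ w₂, w = w₁ ++ w₂ ∧ g w₁ = s ++ u₁ ∧ g w₂ = u₂ ++ t ∧ w₁.getLast? = some a

/-- A word is weakly synchronized if some factorization of it is weakly synchronizing. -/
def WeaklySynchronized {A : Type*} (g : List A → List A) (L : Set (List A)) (u : List A) : Prop :=
  ∃ u₁ u₂, u = u₁ ++ u₂ ∧ WeakSync g L u₁ u₂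

/-- An admissible pair: compatible with at least one interpretation. -/
def Admissible {A : Type*} (g : List A → List A) (L : Set (List A)) (u₁ u₂ : List A) : Prop :=
  ∃ s w t, Interp g L s w t (u₁ ++ u₂) ∧ Compatible g s w t u₁ u₂

/-- A word is bounded if the lengths of its iterated images stay bounded. -/
def BoundedWord {A : Type*} (f : A → List A) (w : List A) : Prop :=
  ∃ C, ∀ k : ℕ, ((applyM f)^[k] w).length ≤ C

/-- `Ω(S)`: primitive words all of whose powers belong to the language. -/
def Omega {A : Type*} (f : A → List A) (W : Set (List A)) : Set (List A) :=
  {v | v ∈ LangG (applyM f) W ∧ Primitive v ∧ ∀ k : ℕ, wpow v k ∈ LangG (applyM f) W}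

/-- Minimal interpretation: `|s| < |f(first letter of w)|` and `|t| < |f(last letter of w)|`. -/
def MinInterp {A : Type*} (f : A → List A) (L : Set (List A)) (s w t u : List A) : Prop :=
  Interp (applyM f) L s w t u ∧ w ≠ [] ∧
    (∀ a, w.head? = some a → s.length < (f a).length) ∧
    (∀ b, w.getLast? = some b → t.length < (f b).length)

theorem stmt9 {A : Type*} [Fintype A] (f : A → List A)
    (W : Set (List A)) (hWfin : W.Finite) (hWne : W.Nonempty)
    (hax : ∀ w ∈ W, w ≠ [])
    (Ds : ℕ)
    (hstrong : ∀ u₁ u₂ : List A,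
      Admissible (applyM f) (LangG (applyM f) W) u₁ u₂ →
      Ds < u₁.length → Ds < u₂.length →
      StrongSync (applyM f) (LangG (applyM f) W) u₁ u₂) :
    ∀ u ∈ LangG (applyM f) W,
      2 * Ds + (Finset.univ.sup fun c : A => (f c).length) < u.length →
      WeaklySynchronized (applyM f) (LangG (applyM f) W) u := by
  classical
  intro u hu hlen
  set M := Finset.univ.sup fun c : A => (f c).length with hM
  set g := applyM f with hg
  set L := LangG g W with hL
  have happ : ∀ a b : List A, g (a ++ b) = g a ++ g b := by
    intro a b; simp [hg, applyM]
  by_cases hI : ∃ s w t, Interp g L s w t u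
  · obtain ⟨s, w, t, hwL, hgw⟩ := hI
    have hex : ∃ i, s.length + Ds < (g (w.take i)).length := by
      refine ⟨w.length, ?_⟩
      rw [List.take_length, hgw]
      simp only [List.length_append]
      omega
    set i := Nat.find hex with hi
    have hPi : s.length + Ds < (g (w.take i)).length := Nat.find_spec hex
    have hile : i ≤ w.length := Nat.find_le (by
      rw [List.take_length, hgw]; simp only [List.length_append]; omega)
    have hi0 : i ≠ 0 := by
      intro h
      rw [h] at hPi
      simp [hg, applyM] at hPi
    have hnj : ¬ (s.length + Ds < (g (w.take (i-1))).length) :=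
      Nat.find_min hex (by omega)
    have hjlt : i - 1 < w.length := by omega
    have htake : w.take i = w.take (i-1) ++ [w.get ⟨i-1, hjlt⟩] := by
      have h1 : i - 1 + 1 = i := by omega
      have := List.take_succ (l := w) (i := i - 1)
      rw [h1] at this
      rw [this, List.getElem?_eq_getElem hjlt]
      simp
    have hbound : (g (w.take i)).length ≤ (g (w.take (i-1))).length + M := by
      rw [htake, happ]
      simp only [List.length_append]
      have : (g [w.get ⟨i-1, hjlt⟩]).length ≤ M := by
        simp only [hg, applyM, List.map_cons, List.map_nil, List.flatten_cons,
          List.flatten_nil, List.append_nil]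
        exact Finset.le_sup (f := fun c : A => (f c).length) (Finset.mem_univ _)
      omega
    set c := (g (w.take i)).length with hc
    set p := c - s.length with hp
    have hDp : Ds < p := by omega
    have hcle : c ≤ s.length + Ds + M := by omega
    have hplt : p < u.length - Ds := by omega
    have hple : p ≤ u.length := by omega
    -- the split of g w at position c
    have hsplit : g (w.take i) ++ g (w.drop i) = g w := by
      rw [← happ, List.take_append_drop]
    have hgw1 : g (w.take i) = s ++ u.take p := by
      have h1 : g (w.take i) = (g w).take c := by
        rw [← hsplit, List.take_left']; rfl
      rw [h1, hgw]
      have hcsp : c = s.length + p := by omega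
      rw [hcsp, List.append_assoc, List.take_length_add_append, List.take_append_of_le_length hple]
    have hgw2 : g (w.drop i) = u.drop p ++ t := by
      have h1 : g (w.drop i) = (g w).drop c := by
        rw [← hsplit, List.drop_left']; rfl
      rw [h1, hgw]
      have hcsp : c = s.length + p := by omega
      rw [hcsp, List.append_assoc, List.drop_length_add_append, List.drop_append_of_le_length hple]
    have hInterp : Interp g L s w t (u.take p ++ u.drop p) := by
      rw [List.take_append_drop]; exact ⟨hwL, hgw⟩
    have hadm : Admissible g L (u.take p) (u.drop p) :=
      ⟨s, w, t, hInterp, w.take i, w.drop i, (List.take_append_drop i w).symm, hgw1, hgw2⟩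
    have hlen1 : Ds < (u.take p).length := by
      rw [List.length_take]; omega
    have hlen2 : Ds < (u.drop p).length := by
      rw [List.length_drop]; omega
    obtain ⟨-, a, hss⟩ := hstrong _ _ hadm hlen1 hlen2
    exact ⟨u.take p, u.drop p, (List.take_append_drop p u).symm,
      fun s' w' t' hi' => by
        obtain ⟨w₁, w₂, h1, h2, h3, -⟩ := hss s' w' t' hi'
        exact ⟨w₁, w₂, h1, h2, h3⟩⟩
  · refine ⟨u, [], (List.append_nil u).symm, fun s w t hint => ?_⟩
    exact absurd ⟨s, w, t, by simpa using hint⟩ hI
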